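/- Let x be a positive light-like vector and y a unit space-like vector (y∘y = 1) in R^{n+1} with x∘y < 0. Then the vector v = (-1/(x∘y))·x + y lies in H^n (v∘v = -1 and v is positive), lies on the polar hyperplane of y (v∘y = 0), and its signed distance h to the horosphere determined by x satisfies e^h = -x∘y (i.e., -v∘x = -x∘y). -/

import Mathlib

/-- The Lorentzian inner product on `ℝ^{n+1}`. -/
def lprod {n : ℕ} (x y : Fin (n + 1) → ℝ) : ℝ :=
  -(x 0 * y 0) + ∑ i : Fin n, x i.succ * y i.succ

lemma lprod_expand {n : ℕ} (x y z : Fin (n + 1) → ℝ) (a : ℝ) :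
    lprod (a • x + y) z = a * lprod x z + lprod y z := by
  simp only [lprod, Pi.add_apply, Pi.smul_apply, smul_eq_mul]
  rw [show (∑ i : Fin n, (a * x i.succ + y i.succ) * z i.succ)
      = ∑ i : Fin n, (a * (x i.succ * z i.succ) + y i.succ * z i.succ) from
      Finset.sum_congr rfl (fun i _ => by ring),
    Finset.sum_add_distrib, ← Finset.mul_sum]
  ring

lemma lprod_comm {n : ℕ} (x y : Fin (n + 1) → ℝ) : lprod x y = lprod y x := by
  simp only [lprod, mul_comm]

lemma lprod_add_right {n : ℕ} (x y z : Fin (n + 1) → ℝ) (a : ℝ) :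
    lprod z (a • x + y) = a * lprod z x + lprod z y := by
  rw [lprod_comm, lprod_expand, lprod_comm x z, lprod_comm y z]

/-- The foot on the polar hyperplane of `y` of the perpendicular toward the
ideal point of `x`, and its signed distance to the horosphere of `x`. -/
theorem foot_on_polar_hyperplane {n : ℕ} (x y : Fin (n + 1) → ℝ)
    (hxx : lprod x x = 0) (hx0 : 0 < x 0)
    (hyy : lprod y y = 1) (hxy : lprod x y < 0) :
    letI v : Fin (n + 1) → ℝ := (-1 / lprod x y) • x + y
    lprod v v = -1 ∧ 0 < v 0 ∧ lprod v y = 0 ∧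
    -lprod v x = -lprod x y := by

  set a : ℝ := -1 / lprod x y with ha
  have hs : lprod x y ≠ 0 := ne_of_lt hxy
  have hvv : lprod (a • x + y) (a • x + y) = -1 := by
    rw [lprod_expand, lprod_add_right, lprod_add_right, hxx, hyy,
      lprod_comm y x, ha]
    field_simp
    ring
  have hvy : lprod (a • x + y) y = 0 := by
    rw [lprod_expand, hyy, ha]
    field_simp
    ring
  have hvx : lprod (a • x + y) x = lprod x y := by
    rw [lprod_expand, hxx, lprod_comm]
    ring
  refine ⟨hvv, ?_, hvy, by rw [hvx]⟩
  -- positivity of v 0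
  have hsq : ∀ z : Fin (n + 1) → ℝ,
      ∑ i : Fin n, z i.succ ^ 2 = ∑ i : Fin n, z i.succ * z i.succ :=
    fun z => Finset.sum_congr rfl (fun i _ => sq _)
  have hx2 : x 0 ^ 2 = ∑ i : Fin n, x i.succ ^ 2 := by
    have h := hxx
    simp only [lprod] at h
    rw [hsq x, sq]
    linarith
  have hy2 : ∑ i : Fin n, y i.succ ^ 2 = 1 + y 0 ^ 2 := by
    have h := hyy
    simp only [lprod] at h
    rw [hsq y]
    nlinarith [sq (y 0)]
  have hcs : (∑ i : Fin n, x i.succ * y i.succ) ^ 2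
      ≤ (∑ i : Fin n, x i.succ ^ 2) * ∑ i : Fin n, y i.succ ^ 2 :=
    Finset.sum_mul_sq_le_sq_mul_sq _ _ _
  set S : ℝ := ∑ i : Fin n, x i.succ * y i.succ with hS
  have hcs' : S ^ 2 ≤ x 0 ^ 2 * (1 + y 0 ^ 2) := by rw [← hx2, hy2] at hcs; exact hcs
  have hxyS : lprod x y = -(x 0 * y 0) + S := rfl
  -- show lprod x y * y 0 < x 0
  have hpos : 0 < x 0 * (1 + y 0 ^ 2) := by positivity
  have hpos2 : 0 < x 0 ^ 2 * (1 + y 0 ^ 2) := by positivity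
  have key0 : (-(x 0 * y 0) + S) * y 0 < x 0 := by
    nlinarith [mul_le_mul_of_nonneg_right hcs' (sq_nonneg (y 0)), hpos, hpos2]
  have key : lprod x y * y 0 < x 0 := by rw [hxyS]; exact key0
  show 0 < a * x 0 + y 0
  have heq : a * x 0 + y 0 = (-(x 0) + lprod x y * y 0) / lprod x y := by
    rw [ha]; field_simp
  rw [heq]
  exact div_pos_of_neg_of_neg (by linarith) hxy
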